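/- arXiv:0711.0928 — 2 statements merged into one kernel-verified Lean document; each statement's English description precedes it below -/
import Mathlib

section
/- Theorem (Theorem 2, case 2). Suppose p_aa < p_ba (equivalently p_bb < p_ab). If p_ba ≥ p_ab, then almost surely with respect to the law of (X_i)_{i≥1}, the set {u ≥ 1 : X_u is a strong a-node of the realization (X_1,…,X_u)} is infinite. Symmetrically, if p_ab ≥ p_ba, then almost every realization has infinitely many strong b-nodes. -/
open MeasureTheory

namespace TwoStateHMM

/-- Parameters of a two-state hidden Markov model: strictly positive transition
probabilities `paa, pab, pba, pbb` with row sums one, the (unique) stationary initial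
distribution `(pia, pib)`, and emission densities `fa, fb` with respect to a σ-finite
measure `lam` on `ℝ^d`, such that the emission distributions differ. -/
structure HMMParams (d : ℕ) where
  paa : ℝ
  pab : ℝ
  pba : ℝ
  pbb : ℝ
  pia : ℝ
  pib : ℝ
  fa : (Fin d → ℝ) → ℝ
  fb : (Fin d → ℝ) → ℝ
  lam : Measure (Fin d → ℝ)
  paa_pos : 0 < paa
  pab_pos : 0 < pab
  pba_pos : 0 < pba
  pbb_pos : 0 < pbb
  rowa : paa + pab = 1
  rowb : pba + pbb = 1
  pia_pos : 0 < pia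
  pib_pos : 0 < pib
  pi_sum : pia + pib = 1
  pi_stat : pia = pia * paa + pib * pba
  fa_nonneg : ∀ x, 0 ≤ fa x
  fb_nonneg : ∀ x, 0 ≤ fb x
  fa_meas : Measurable fa
  fb_meas : Measurable fb
  lam_sigmaFinite : SigmaFinite lam
  fa_int : ∫ x, fa x ∂lam = 1
  fb_int : ∫ x, fb x ∂lam = 1
  emis_ne : 0 < lam {x | fa x ≠ fb x}

variable {d : ℕ}

/-- Viterbi scores: `delta P x u = (δ_{u+1}(a), δ_{u+1}(b))` of the sequence
`x_1 = x 0, x_2 = x 1, …` (0-indexed time `u` corresponds to the `(u+1)`-th observation). -/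
noncomputable def delta (P : HMMParams d) (x : ℕ → (Fin d → ℝ)) : ℕ → ℝ × ℝ
  | 0 => (P.pia * P.fa (x 0), P.pib * P.fb (x 0))
  | u + 1 =>
      (max ((delta P x u).1 * P.paa) ((delta P x u).2 * P.pba) * P.fa (x (u + 1)),
       max ((delta P x u).1 * P.pab) ((delta P x u).2 * P.pbb) * P.fb (x (u + 1)))

/-- `x u` (the `(u+1)`-th observation) is a strong `a`-node:
`δ(a)·p_aa > δ(b)·p_ba` and `δ(a)·p_ab > δ(b)·p_bb`. -/
def StrongANode (P : HMMParams d) (x : ℕ → (Fin d → ℝ)) (u : ℕ) : Prop :=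
  (delta P x u).2 * P.pba < (delta P x u).1 * P.paa ∧
  (delta P x u).2 * P.pbb < (delta P x u).1 * P.pab

/-- Strong `b`-node. -/
def StrongBNode (P : HMMParams d) (x : ℕ → (Fin d → ℝ)) (u : ℕ) : Prop :=
  (delta P x u).1 * P.paa < (delta P x u).2 * P.pba ∧
  (delta P x u).1 * P.pab < (delta P x u).2 * P.pbb

/-- Strong node: strong `a`-node or strong `b`-node. -/
def StrongNode (P : HMMParams d) (x : ℕ → (Fin d → ℝ)) (u : ℕ) : Prop :=
  StrongANode P x u ∨ StrongBNode P x u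

/-- Weak (not necessarily strong) `a`-node. -/
def WeakANode (P : HMMParams d) (x : ℕ → (Fin d → ℝ)) (u : ℕ) : Prop :=
  (delta P x u).2 * P.pba ≤ (delta P x u).1 * P.paa ∧
  (delta P x u).2 * P.pbb ≤ (delta P x u).1 * P.pab

/-- Weak (not necessarily strong) `b`-node. -/
def WeakBNode (P : HMMParams d) (x : ℕ → (Fin d → ℝ)) (u : ℕ) : Prop :=
  (delta P x u).1 * P.paa ≤ (delta P x u).2 * P.pba ∧
  (delta P x u).1 * P.pab ≤ (delta P x u).2 * P.pbb

/-- Weak node: weak `a`-node or weak `b`-node. -/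
def WeakNode (P : HMMParams d) (x : ℕ → (Fin d → ℝ)) (u : ℕ) : Prop :=
  WeakANode P x u ∨ WeakBNode P x u

/-- The sequence obtained by appending the block `z` after the first `m` elements of `x`. -/
def concatSeq (m : ℕ) (x z : ℕ → (Fin d → ℝ)) : ℕ → (Fin d → ℝ) :=
  fun i => if i < m then x i else z (i - m)

/-- The block `z 0, …, z (k-1)` is a strong barrier: appended to any prefix, it
contains a strong node. -/
def IsStrongBarrier (P : HMMParams d) (k : ℕ) (z : ℕ → (Fin d → ℝ)) : Prop :=
  ∀ (m : ℕ) (x : ℕ → (Fin d → ℝ)),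
    ∃ u, m ≤ u ∧ u < m + k ∧ StrongNode P (concatSeq m x z) u

/-- The block `z 0, …, z (k-1)` is a strong `a`-barrier. -/
def IsStrongABarrier (P : HMMParams d) (k : ℕ) (z : ℕ → (Fin d → ℝ)) : Prop :=
  ∀ (m : ℕ) (x : ℕ → (Fin d → ℝ)),
    ∃ u, m ≤ u ∧ u < m + k ∧ StrongANode P (concatSeq m x z) u

/-- The block `z 0, …, z (k-1)` is a strong `b`-barrier. -/
def IsStrongBBarrier (P : HMMParams d) (k : ℕ) (z : ℕ → (Fin d → ℝ)) : Prop :=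
  ∀ (m : ℕ) (x : ℕ → (Fin d → ℝ)),
    ∃ u, m ≤ u ∧ u < m + k ∧ StrongBNode P (concatSeq m x z) u

/-- Initial probabilities indexed by the hidden state (`true = a`, `false = b`). -/
def HMMParams.initP (P : HMMParams d) : Bool → ℝ := fun s => if s then P.pia else P.pib

/-- Transition probabilities indexed by the hidden states (`true = a`, `false = b`). -/
def HMMParams.transP (P : HMMParams d) : Bool → Bool → ℝ := fun s t =>
  if s then (if t then P.paa else P.pab) else (if t then P.pba else P.pbb)

/-- Emission densities indexed by the hidden state. -/
def HMMParams.dens (P : HMMParams d) : Bool → (Fin d → ℝ) → ℝ := fun s =>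
  if s then P.fa else P.fb

/-- Emission distributions `P_a = f_a·λ`, `P_b = f_b·λ`. -/
noncomputable def HMMParams.emis (P : HMMParams d) : Bool → Measure (Fin d → ℝ) := fun s =>
  P.lam.withDensity fun x => ENNReal.ofReal (P.dens s x)

/-- The likelihood `Λ_π(y_{1:n+1}; x_{1:n+1})` of the hidden path `y` of length `n+1`. -/
noncomputable def likelihood (P : HMMParams d) (n : ℕ) (y : Fin (n + 1) → Bool)
    (x : ℕ → (Fin d → ℝ)) : ℝ :=
  P.initP (y 0) * (∏ i : Fin n, P.transP (y i.castSucc) (y i.succ)) *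
    ∏ i : Fin (n + 1), P.dens (y i) (x i)

/-- `(Y, X)` is (a version of) the two-state HMM with parameters `P` on the probability
space `(Ω, μ)`: the finite-dimensional joint distributions are those of a stationary
Markov chain `Y` with the given transition probabilities, together with observations
`X` that are conditionally independent given `Y`, `X_i` having distribution `P_{Y_i}`. -/
def IsHMM (P : HMMParams d) {Ω : Type} [MeasurableSpace Ω] (μ : Measure Ω)
    (Y : ℕ → Ω → Bool) (X : ℕ → Ω → (Fin d → ℝ)) : Prop :=
  IsProbabilityMeasure μ ∧ (∀ i, Measurable (Y i)) ∧ (∀ i, Measurable (X i)) ∧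
  ∀ (n : ℕ) (y : Fin (n + 1) → Bool) (A : Fin (n + 1) → Set (Fin d → ℝ)),
    (∀ i, MeasurableSet (A i)) →
    μ {ω | ∀ i : Fin (n + 1), Y i ω = y i ∧ X i ω ∈ A i} =
      ENNReal.ofReal (P.initP (y 0) * ∏ i : Fin n, P.transP (y i.castSucc) (y i.succ)) *
        ∏ i : Fin (n + 1), P.emis (y i) (A i)

section Det

variable (P : HMMParams d)

lemma delta_succ (x : ℕ → Fin d → ℝ) (u : ℕ) :
    delta P x (u + 1) =
      (max ((delta P x u).1 * P.paa) ((delta P x u).2 * P.pba) * P.fa (x (u + 1)),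
       max ((delta P x u).1 * P.pab) ((delta P x u).2 * P.pbb) * P.fb (x (u + 1))) := rfl

lemma delta_nonneg (x : ℕ → Fin d → ℝ) : ∀ u, 0 ≤ (delta P x u).1 ∧ 0 ≤ (delta P x u).2 := by
  intro u
  induction u with
  | zero =>
      constructor
      · exact mul_nonneg P.pia_pos.le (P.fa_nonneg _)
      · exact mul_nonneg P.pib_pos.le (P.fb_nonneg _)
  | succ u ih =>
      rw [delta_succ]
      constructor
      · exact mul_nonneg (le_max_of_le_left (mul_nonneg ih.1 P.paa_pos.le)) (P.fa_nonneg _)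
      · exact mul_nonneg (le_max_of_le_left (mul_nonneg ih.1 P.pab_pos.le)) (P.fb_nonneg _)

lemma delta_pos (x : ℕ → Fin d → ℝ) (hg : ∀ i, 0 < P.fa (x i) ∨ 0 < P.fb (x i)) :
    ∀ u, 0 < (delta P x u).1 + (delta P x u).2 := by
  intro u
  induction u with
  | zero =>
      rcases hg 0 with h | h
      · have : 0 < P.pia * P.fa (x 0) := mul_pos P.pia_pos h
        have h2 : 0 ≤ P.pib * P.fb (x 0) := mul_nonneg P.pib_pos.le (P.fb_nonneg _)
        show 0 < P.pia * P.fa (x 0) + P.pib * P.fb (x 0)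
        linarith
      · have : 0 < P.pib * P.fb (x 0) := mul_pos P.pib_pos h
        have h2 : 0 ≤ P.pia * P.fa (x 0) := mul_nonneg P.pia_pos.le (P.fa_nonneg _)
        show 0 < P.pia * P.fa (x 0) + P.pib * P.fb (x 0)
        linarith
  | succ u ih =>
      obtain ⟨ha, hb⟩ := delta_nonneg P x u
      have hMa : 0 < max ((delta P x u).1 * P.paa) ((delta P x u).2 * P.pba) := by
        rcases lt_or_ge 0 (delta P x u).1 with h | h
        · exact lt_max_of_lt_left (mul_pos h P.paa_pos)
        · have : (delta P x u).1 = 0 := le_antisymm h ha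
          have hbpos : 0 < (delta P x u).2 := by nlinarith [ih]
          exact lt_max_of_lt_right (mul_pos hbpos P.pba_pos)
      have hMb : 0 < max ((delta P x u).1 * P.pab) ((delta P x u).2 * P.pbb) := by
        rcases lt_or_ge 0 (delta P x u).1 with h | h
        · exact lt_max_of_lt_left (mul_pos h P.pab_pos)
        · have : (delta P x u).1 = 0 := le_antisymm h ha
          have hbpos : 0 < (delta P x u).2 := by nlinarith [ih]
          exact lt_max_of_lt_right (mul_pos hbpos P.pbb_pos)
      rw [delta_succ]
      rcases hg (u + 1) with h | h
      · have h1 : 0 < max ((delta P x u).1 * P.paa) ((delta P x u).2 * P.pba) * P.fa (x (u+1)) :=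
          mul_pos hMa h
        have h2 : 0 ≤ max ((delta P x u).1 * P.pab) ((delta P x u).2 * P.pbb) * P.fb (x (u+1)) :=
          mul_nonneg hMb.le (P.fb_nonneg _)
        dsimp only
        linarith
      · have h1 : 0 < max ((delta P x u).1 * P.pab) ((delta P x u).2 * P.pbb) * P.fb (x (u+1)) :=
          mul_pos hMb h
        have h2 : 0 ≤ max ((delta P x u).1 * P.paa) ((delta P x u).2 * P.pba) * P.fa (x (u+1)) :=
          mul_nonneg hMa.le (P.fa_nonneg _)
        dsimp only
        linarith

lemma pbb_le_paa (hba : P.pab ≤ P.pba) : P.pbb ≤ P.paa := by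
  have := P.rowa; have := P.rowb; linarith

lemma pbb_lt_pab (hc : P.paa < P.pba) : P.pbb < P.pab := by
  have := P.rowa; have := P.rowb; linarith

lemma cross_lt (hc : P.paa < P.pba) : P.pbb * P.paa < P.pab * P.pba := by
  have h1 := pbb_lt_pab P hc
  have h2 := P.paa_pos
  have h3 := P.pba_pos
  have h4 := P.pbb_pos
  nlinarith

lemma strongA_iff (hc : P.paa < P.pba) (x : ℕ → Fin d → ℝ) (u : ℕ) :
    StrongANode P x u ↔ (delta P x u).2 * P.pba < (delta P x u).1 * P.paa := by
  constructor
  · exact fun h => h.1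
  · intro h
    refine ⟨h, ?_⟩
    obtain ⟨ha, hb⟩ := delta_nonneg P x u
    have hA : 0 < (delta P x u).1 := by nlinarith [P.paa_pos, P.pba_pos]
    have := cross_lt P hc
    have h3 := P.pba_pos
    have h4 := P.pbb_pos
    nlinarith

end Det
section Block

variable (P : HMMParams d)

lemma node_in_block (hc : P.paa < P.pba) (hba : P.pab ≤ P.pba) {ε : ℝ} (hε : 0 < ε)
    {k : ℕ} (hk : 1 ≤ k) (hkbig : P.pba * P.pab < (1 + ε) ^ (2 * k - 1) * (P.paa * P.paa))
    (x : ℕ → Fin d → ℝ) (m : ℕ)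
    (hg : ∀ i, 0 < P.fa (x i) ∨ 0 < P.fb (x i))
    (hlo : ∀ j < k, 0 < P.fb (x (m + 2 * j)) ∧
      (1 + ε) * P.fa (x (m + 2 * j)) ≤ P.fb (x (m + 2 * j)))
    (hhi : ∀ j < k, 0 < P.fa (x (m + 2 * j + 1)) ∧
      (1 + ε) * P.fb (x (m + 2 * j + 1)) ≤ P.fa (x (m + 2 * j + 1))) :
    ∃ u, m ≤ u ∧ u < m + 2 * k ∧ StrongANode P x u := by
  by_contra hno
  push_neg at hno
  -- non-node inequalities
  have hn : ∀ u, m ≤ u → u < m + 2 * k →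
      (delta P x u).1 * P.paa ≤ (delta P x u).2 * P.pba := by
    intro u h1 h2
    have := hno u h1 h2
    rw [strongA_iff P hc] at this
    exact not_lt.mp this
  have he : (0:ℝ) < 1 + ε := by linarith
  have hpaa := P.paa_pos
  have hpab := P.pab_pos
  have hpba := P.pba_pos
  have hpbb := P.pbb_pos
  have hbbaa := pbb_le_paa P hba
  -- B positive at every non-node time
  have hBpos : ∀ u, m ≤ u → u < m + 2 * k → 0 < (delta P x u).2 := by
    intro u h1 h2
    obtain ⟨ha, hb⟩ := delta_nonneg P x u
    have hsum := delta_pos P x hg u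
    have hnn := hn u h1 h2
    rcases hb.lt_or_eq with h | h
    · exact h
    · exfalso; nlinarith
  -- per lo-time facts: for j < k, with u = m+2j, v = u+1:
  -- fbv > 0, K1, Bv = Au*pab*fbv, Av ≥ (1+ε)*Bu*pba*fbv
  have key : ∀ j < k,
      0 < P.fb (x (m + 2 * j + 1)) ∧
      (delta P x (m + 2 * j)).2 * ((1 + ε) * P.paa) ≤ (delta P x (m + 2 * j)).1 * P.pab ∧
      (delta P x (m + 2 * j + 1)).2
        = (delta P x (m + 2 * j)).1 * P.pab * P.fb (x (m + 2 * j + 1)) ∧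
      (1 + ε) * ((delta P x (m + 2 * j)).2 * P.pba * P.fb (x (m + 2 * j + 1)))
        ≤ (delta P x (m + 2 * j + 1)).1 := by
    intro j hj
    set u := m + 2 * j with hu
    have humem1 : m ≤ u := by omega
    have humem2 : u < m + 2 * k := by omega
    have hvmem1 : m ≤ u + 1 := by omega
    have hvmem2 : u + 1 < m + 2 * k := by omega
    obtain ⟨hAu, hBu⟩ := delta_nonneg P x u
    have hBupos := hBpos u humem1 humem2
    obtain ⟨hfav, hfv⟩ := hhi j hj
    have hdv := delta_succ P x u
    set Au := (delta P x u).1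
    set Bu := (delta P x u).2
    set Av := (delta P x (u+1)).1 with hAv
    set Bv := (delta P x (u+1)).2 with hBv
    have hAveq : Av = max (Au * P.paa) (Bu * P.pba) * P.fa (x (u + 1)) := by
      rw [hAv, hdv]
    have hBveq : Bv = max (Au * P.pab) (Bu * P.pbb) * P.fb (x (u + 1)) := by
      rw [hBv, hdv]
    -- fb at v positive
    have hfbv : 0 < P.fb (x (u + 1)) := by
      rcases (P.fb_nonneg (x (u+1))).lt_or_eq with h | h
      · exact h
      · exfalso
        have hBv0 : Bv = 0 := by rw [hBveq, ← h]; ring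
        have hAvpos : 0 < Av := by
          rw [hAveq]
          exact mul_pos (lt_max_of_lt_right (mul_pos hBupos hpba)) hfav
        have := hn (u+1) hvmem1 hvmem2
        rw [← hAv, ← hBv, hBv0] at this
        nlinarith
    -- from non-node at v : Bu*(1+ε)*paa ≤ max (Au*pab) (Bu*pbb)
    have hnv := hn (u+1) hvmem1 hvmem2
    rw [← hAv, ← hBv] at hnv
    have hAvlb : Bu * P.pba * ((1+ε) * P.fb (x (u+1))) ≤ Av := by
      rw [hAveq]
      have h1 : Bu * P.pba ≤ max (Au * P.paa) (Bu * P.pba) := le_max_right _ _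
      have h2 : (1+ε) * P.fb (x (u+1)) ≤ P.fa (x (u+1)) := hfv
      calc Bu * P.pba * ((1+ε) * P.fb (x (u+1)))
          ≤ Bu * P.pba * P.fa (x (u+1)) := by
            exact mul_le_mul_of_nonneg_left h2 (mul_nonneg hBu hpba.le)
        _ ≤ max (Au * P.paa) (Bu * P.pba) * P.fa (x (u+1)) :=
            mul_le_mul_of_nonneg_right h1 (P.fa_nonneg _)
    have hmaxle : Bu * ((1+ε) * P.paa) ≤ max (Au * P.pab) (Bu * P.pbb) := by
      have h1 : Bu * P.pba * ((1+ε) * P.fb (x (u+1))) * P.paa ≤ Av * P.paa :=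
        mul_le_mul_of_nonneg_right hAvlb hpaa.le
      have h2 : Av * P.paa ≤ Bv * P.pba := hnv
      rw [hBveq] at h2
      -- Bu * pba * ((1+ε) * fbv) * paa ≤ max (Au*pab) (Bu*pbb) * fbv * pba
      have h3 : Bu * P.pba * ((1+ε) * P.fb (x (u+1))) * P.paa
          ≤ max (Au * P.pab) (Bu * P.pbb) * P.fb (x (u+1)) * P.pba := le_trans h1 h2
      have h4 : (Bu * ((1+ε) * P.paa)) * (P.fb (x (u+1)) * P.pba)
          ≤ (max (Au * P.pab) (Bu * P.pbb)) * (P.fb (x (u+1)) * P.pba) := by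
        calc (Bu * ((1+ε) * P.paa)) * (P.fb (x (u+1)) * P.pba)
            = Bu * P.pba * ((1+ε) * P.fb (x (u+1))) * P.paa := by ring
          _ ≤ max (Au * P.pab) (Bu * P.pbb) * P.fb (x (u+1)) * P.pba := h3
          _ = (max (Au * P.pab) (Bu * P.pbb)) * (P.fb (x (u+1)) * P.pba) := by ring
      exact le_of_mul_le_mul_right h4 (mul_pos hfbv hpba)
    have hK1 : Bu * ((1+ε) * P.paa) ≤ Au * P.pab := by
      rcases max_cases (Au * P.pab) (Bu * P.pbb) with ⟨hm, _⟩ | ⟨hm, _⟩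
      · rw [hm] at hmaxle; exact hmaxle
      · rw [hm] at hmaxle; exfalso
        have h5 : Bu * P.pbb ≤ Bu * P.paa := mul_le_mul_of_nonneg_left hbbaa hBupos.le
        nlinarith [mul_pos hBupos (mul_pos hε hpaa)]
    have hmaxeq : max (Au * P.pab) (Bu * P.pbb) = Au * P.pab := by
      apply max_eq_left
      have h5 : Bu * P.pbb ≤ Bu * P.paa := mul_le_mul_of_nonneg_left hbbaa hBupos.le
      nlinarith [mul_pos hBupos (mul_pos hε hpaa)]
    refine ⟨hfbv, hK1, ?_, ?_⟩
    · rw [hBveq, hmaxeq]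
    · calc (1 + ε) * (Bu * P.pba * P.fb (x (u+1)))
          = Bu * P.pba * ((1+ε) * P.fb (x (u+1))) := by ring
        _ ≤ Av := hAvlb
  -- main induction : S j
  have main : ∀ j, j < k →
      (delta P x (m + 2 * j)).1 * ((1 + ε) ^ (2 * j) * P.paa)
        ≤ (delta P x (m + 2 * j)).2 * P.pba := by
    intro j
    induction j with
    | zero =>
        intro hj
        simpa using hn m (le_refl m) (by omega)
    | succ j ih =>
        intro hj
        have hjk : j < k := by omega
        have Sj := ih hjk
        obtain ⟨hfbv, hK1, hBveq, hAvlb⟩ := key j hjk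
        set u := m + 2 * j with hu
        set v := u + 1 with hv
        have hu' : m + 2 * (j + 1) = v + 1 := by omega
        obtain ⟨hAu, hBu⟩ := delta_nonneg P x u
        obtain ⟨hAv, hBv⟩ := delta_nonneg P x v
        have hnv : (delta P x v).1 * P.paa ≤ (delta P x v).2 * P.pba :=
          hn v (by omega) (by omega)
        obtain ⟨hfblo, hflo⟩ := hlo (j+1) hj
        rw [hu'] at *
        have hd := delta_succ P x v
        set Au := (delta P x u).1
        set Bu := (delta P x u).2
        set Av := (delta P x v).1
        set Bv := (delta P x v).2
        set Au' := (delta P x (v+1)).1 with hAu'd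
        set Bu' := (delta P x (v+1)).2 with hBu'd
        have hAu'eq : Au' = max (Av * P.paa) (Bv * P.pba) * P.fa (x (v + 1)) := by
          rw [hAu'd, hd]
        have hBu'eq : Bu' = max (Av * P.pab) (Bv * P.pbb) * P.fb (x (v + 1)) := by
          rw [hBu'd, hd]
        have hmax1 : max (Av * P.paa) (Bv * P.pba) = Bv * P.pba := max_eq_right hnv
        have hAu'ub : Au' * (1 + ε) ≤ Bv * P.pba * P.fb (x (v+1)) := by
          rw [hAu'eq, hmax1]
          have hBvnn : 0 ≤ Bv * P.pba := mul_nonneg hBv hpba.le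
          calc Bv * P.pba * P.fa (x (v+1)) * (1+ε)
              = Bv * P.pba * ((1+ε) * P.fa (x (v+1))) := by ring
            _ ≤ Bv * P.pba * P.fb (x (v+1)) := mul_le_mul_of_nonneg_left hflo hBvnn
        have hBu'lb : Av * P.pab * P.fb (x (v+1)) ≤ Bu' := by
          rw [hBu'eq]
          exact mul_le_mul_of_nonneg_right (le_max_left _ _) (P.fb_nonneg _)
        -- now chain
        have e2 : (1:ℝ) + ε > 0 := he
        have hpow : (0:ℝ) < (1+ε) ^ (2 * j) := pow_pos he _
        have epow : (1+ε) ^ (2 * (j+1)) = (1+ε) ^ (2*j) * (1+ε) * (1+ε) := by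
          rw [show 2 * (j+1) = 2*j + 1 + 1 by omega, pow_succ, pow_succ]
        -- step 1 : Au' * e^{2j+2} * paa ≤ Bv*pba*fb(v+1) * e^{2j+1} * paa
        have step1 : Au' * ((1+ε) ^ (2*(j+1)) * P.paa)
            ≤ Bv * P.pba * P.fb (x (v+1)) * ((1+ε) ^ (2*j) * (1+ε) * P.paa) := by
          rw [epow]
          calc Au' * ((1+ε)^(2*j) * (1+ε) * (1+ε) * P.paa)
              = (Au' * (1+ε)) * ((1+ε)^(2*j) * (1+ε) * P.paa) := by ring
            _ ≤ (Bv * P.pba * P.fb (x (v+1))) * ((1+ε)^(2*j) * (1+ε) * P.paa) := by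
                apply mul_le_mul_of_nonneg_right hAu'ub
                positivity
        -- step 2 : substitute Bv
        have step2 : Bv * P.pba * P.fb (x (v+1)) * ((1+ε) ^ (2*j) * (1+ε) * P.paa)
            = (Au * ((1+ε)^(2*j) * P.paa)) * (P.pab * P.fb (x v) * P.pba * P.fb (x (v+1)) * (1+ε)) := by
          rw [hBveq]; ring
        -- step 3 : use Sj
        have hmulnn : (0:ℝ) ≤ P.pab * P.fb (x v) * P.pba * P.fb (x (v+1)) * (1+ε) := by
          positivity
        have step3 : (Au * ((1+ε)^(2*j) * P.paa)) * (P.pab * P.fb (x v) * P.pba * P.fb (x (v+1)) * (1+ε))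
            ≤ (Bu * P.pba) * (P.pab * P.fb (x v) * P.pba * P.fb (x (v+1)) * (1+ε)) :=
          mul_le_mul_of_nonneg_right Sj hmulnn
        -- step 4 : use Av lower bound : (1+ε) * (Bu*pba*fb v) ≤ Av
        have step4 : (Bu * P.pba) * (P.pab * P.fb (x v) * P.pba * P.fb (x (v+1)) * (1+ε))
            ≤ Av * (P.pab * P.pba * P.fb (x (v+1))) := by
          have h1 : (1 + ε) * (Bu * P.pba * P.fb (x v)) ≤ Av := hAvlb
          calc (Bu * P.pba) * (P.pab * P.fb (x v) * P.pba * P.fb (x (v+1)) * (1+ε))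
              = ((1+ε) * (Bu * P.pba * P.fb (x v))) * (P.pab * P.pba * P.fb (x (v+1))) := by ring
            _ ≤ Av * (P.pab * P.pba * P.fb (x (v+1))) := by
                apply mul_le_mul_of_nonneg_right h1
                positivity
        -- step 5 : use Bu' lower bound
        have step5 : Av * (P.pab * P.pba * P.fb (x (v+1))) ≤ Bu' * P.pba := by
          calc Av * (P.pab * P.pba * P.fb (x (v+1)))
              = (Av * P.pab * P.fb (x (v+1))) * P.pba := by ring
            _ ≤ Bu' * P.pba := mul_le_mul_of_nonneg_right hBu'lb hpba.le
        calc Au' * ((1+ε) ^ (2*(j+1)) * P.paa)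
            ≤ Bv * P.pba * P.fb (x (v+1)) * ((1+ε) ^ (2*j) * (1+ε) * P.paa) := step1
          _ = (Au * ((1+ε)^(2*j) * P.paa)) * (P.pab * P.fb (x v) * P.pba * P.fb (x (v+1)) * (1+ε)) := step2
          _ ≤ (Bu * P.pba) * (P.pab * P.fb (x v) * P.pba * P.fb (x (v+1)) * (1+ε)) := step3
          _ ≤ Av * (P.pab * P.pba * P.fb (x (v+1))) := step4
          _ ≤ Bu' * P.pba := step5
  -- final contradiction at j = k - 1
  have hk1 : k - 1 < k := by omega
  have S := main (k-1) hk1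
  obtain ⟨_, hK1, _, _⟩ := key (k-1) hk1
  set u := m + 2 * (k-1) with hu
  obtain ⟨hAu, hBu⟩ := delta_nonneg P x u
  have hBupos := hBpos u (by omega) (by omega)
  set Au := (delta P x u).1
  set Bu := (delta P x u).2
  -- Bu*(1+ε)*paa * (1+ε)^{2(k-1)} * paa ≤ Bu*pba*pab
  have h1 : (Bu * ((1+ε) * P.paa)) * ((1+ε)^(2*(k-1)) * P.paa)
      ≤ (Au * P.pab) * ((1+ε)^(2*(k-1)) * P.paa) := by
    apply mul_le_mul_of_nonneg_right hK1
    positivity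
  have h2 : (Au * P.pab) * ((1+ε)^(2*(k-1)) * P.paa) ≤ (Bu * P.pba) * P.pab := by
    calc (Au * P.pab) * ((1+ε)^(2*(k-1)) * P.paa)
        = (Au * ((1+ε)^(2*(k-1)) * P.paa)) * P.pab := by ring
      _ ≤ (Bu * P.pba) * P.pab := mul_le_mul_of_nonneg_right S P.pab_pos.le
  have hfin : (1+ε)^(2*k-1) * (P.paa * P.paa) ≤ P.pba * P.pab := by
    have he : (0:ℝ) < 1 + ε := by linarith
    have hpowsplit : (1+ε)^(2*k-1) = (1+ε)^(2*(k-1)) * (1+ε) := by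
      rw [← pow_succ]
      congr 1
      omega
    have h3 : Bu * ((1+ε)^(2*k-1) * (P.paa * P.paa)) ≤ Bu * (P.pba * P.pab) := by
      calc Bu * ((1+ε)^(2*k-1) * (P.paa * P.paa))
          = (Bu * ((1+ε) * P.paa)) * ((1+ε)^(2*(k-1)) * P.paa) := by
            rw [hpowsplit]; ring
        _ ≤ (Bu * P.pba) * P.pab := le_trans h1 h2
        _ = Bu * (P.pba * P.pab) := by ring
    exact le_of_mul_le_mul_left h3 hBupos
  linarith

end Block
section Sets

variable (P : HMMParams d)

lemma dens_nonneg (s : Bool) (x : Fin d → ℝ) : 0 ≤ P.dens s x := by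
  cases s <;> simp [HMMParams.dens, P.fa_nonneg, P.fb_nonneg]

lemma dens_meas (s : Bool) : Measurable (P.dens s) := by
  cases s <;> simp [HMMParams.dens, P.fa_meas, P.fb_meas]

lemma dens_int (s : Bool) : ∫ x, P.dens s x ∂P.lam = 1 := by
  cases s <;> simp [HMMParams.dens, P.fa_int, P.fb_int]

lemma dens_integrable (s : Bool) : Integrable (P.dens s) P.lam := by
  by_contra h
  have := MeasureTheory.integral_undef h
  rw [dens_int] at this
  norm_num at this

lemma emis_apply (s : Bool) {A : Set (Fin d → ℝ)} (hA : MeasurableSet A) :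
    P.emis s A = ∫⁻ x in A, ENNReal.ofReal (P.dens s x) ∂P.lam := by
  rw [HMMParams.emis, withDensity_apply _ hA]

lemma emis_univ (s : Bool) : P.emis s Set.univ = 1 := by
  rw [emis_apply P s MeasurableSet.univ, setLIntegral_univ,
    ← MeasureTheory.ofReal_integral_eq_lintegral_ofReal (dens_integrable P s)
      (Filter.Eventually.of_forall (dens_nonneg P s)), dens_int]
  norm_num

instance emis_prob (s : Bool) : IsProbabilityMeasure (P.emis s) := ⟨emis_univ P s⟩

lemma emis_le_one (s : Bool) (A : Set (Fin d → ℝ)) : P.emis s A ≤ 1 := by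
  rw [← emis_univ P s]; exact measure_mono (Set.subset_univ A)

lemma emis_ne_top (s : Bool) (A : Set (Fin d → ℝ)) : P.emis s A ≠ ⊤ :=
  ((emis_le_one P s A).trans_lt ENNReal.one_lt_top).ne

/-- emission measure of the set where the density vanishes is zero -/
lemma emis_zero_of_dens_zero (s : Bool) {A : Set (Fin d → ℝ)} (hA : MeasurableSet A)
    (h : ∀ x ∈ A, P.dens s x = 0) : P.emis s A = 0 := by
  rw [emis_apply P s hA]
  rw [MeasureTheory.setLIntegral_congr_fun hA
    (fun x hx => by rw [h x hx])]
  simp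

lemma emis_pos_of_dens_pos (s : Bool) {A : Set (Fin d → ℝ)} (hA : MeasurableSet A)
    (hpos : 0 < P.lam A) (h : ∀ x ∈ A, 0 < P.dens s x) : 0 < P.emis s A := by
  rw [emis_apply P s hA]
  rw [pos_iff_ne_zero]
  intro hzero
  rw [MeasureTheory.setLIntegral_eq_zero_iff hA
    (Measurable.ennreal_ofReal (dens_meas P s))] at hzero
  rw [MeasureTheory.ae_iff] at hzero
  have hsub : A ⊆ {x | ¬ (x ∈ A → ENNReal.ofReal (P.dens s x) = 0)} := by
    intro x hx
    simp only [Set.mem_setOf_eq, not_forall]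
    exact ⟨hx, (ENNReal.ofReal_pos.mpr (h x hx)).ne'⟩
  have := measure_mono_null hsub hzero
  rw [this] at hpos
  exact lt_irrefl _ hpos

/-- both "fa > fb" and "fb > fa" have positive lam-measure -/
lemma both_sides_pos :
    0 < P.lam {x | P.fb x < P.fa x} ∧ 0 < P.lam {x | P.fa x < P.fb x} := by
  have hint : ∀ (f g : (Fin d → ℝ) → ℝ), (∀ x, 0 ≤ f x) → (∀ x, 0 ≤ g x) →
      Measurable f → Measurable g →
      (∫ x, f x ∂P.lam = 1) → (∫ x, g x ∂P.lam = 1) →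
      P.lam {x | g x < f x} = 0 → P.lam {x | f x ≠ g x} = 0 := by
    intro f g hf hg hfm hgm hfi hgi hnull
    have hfI : Integrable f P.lam := by
      by_contra h; rw [MeasureTheory.integral_undef h] at hfi; norm_num at hfi
    have hgI : Integrable g P.lam := by
      by_contra h; rw [MeasureTheory.integral_undef h] at hgi; norm_num at hgi
    have hle : ∀ᵐ x ∂P.lam, f x ≤ g x := by
      rw [MeasureTheory.ae_iff]
      convert hnull using 2
      ext x; simp [not_le]
    have hsub : Integrable (fun x => g x - f x) P.lam := hgI.sub hfI
    have hnonneg : 0 ≤ᵐ[P.lam] fun x => g x - f x := by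
      filter_upwards [hle] with x hx
      simp [sub_nonneg, hx]
    have hzero : ∫ x, (g x - f x) ∂P.lam = 0 := by
      rw [MeasureTheory.integral_sub hgI hfI, hfi, hgi]; ring
    have := (MeasureTheory.integral_eq_zero_iff_of_nonneg_ae hnonneg hsub).mp hzero
    have hae : ∀ᵐ x ∂P.lam, f x = g x := by
      filter_upwards [this] with x hx
      have : g x - f x = 0 := hx
      linarith
    rw [MeasureTheory.ae_iff] at hae
    convert hae using 2
  constructor
  · rw [pos_iff_ne_zero]
    intro h
    have := hint P.fa P.fb P.fa_nonneg P.fb_nonneg P.fa_meas P.fb_meas P.fa_int P.fb_int h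
    exact absurd this (pos_iff_ne_zero.mp P.emis_ne)
  · rw [pos_iff_ne_zero]
    intro h
    have := hint P.fb P.fa P.fb_nonneg P.fa_nonneg P.fb_meas P.fa_meas P.fb_int P.fa_int h
    have h2 : P.lam {x | P.fa x ≠ P.fb x} = 0 := by
      convert this using 2
      ext x; simp [ne_comm]
    exact absurd h2 (pos_iff_ne_zero.mp P.emis_ne)

/-- choice of ε and the high/low ratio sets -/
lemma exists_eps_sets :
    ∃ ε : ℝ, 0 < ε ∧ ∃ Ls Hs : Set (Fin d → ℝ),
      MeasurableSet Ls ∧ MeasurableSet Hs ∧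
      0 < P.emis false Ls ∧ 0 < P.emis true Hs ∧
      (∀ x ∈ Ls, 0 < P.fb x ∧ (1 + ε) * P.fa x ≤ P.fb x) ∧
      (∀ x ∈ Hs, 0 < P.fa x ∧ (1 + ε) * P.fb x ≤ P.fa x) := by
  obtain ⟨hA, hB⟩ := both_sides_pos P
  -- decompose each side into countably many uniform-ratio sets
  have key : ∀ (f g : (Fin d → ℝ) → ℝ), (∀ x, 0 ≤ g x) → Measurable f → Measurable g →
      0 < P.lam {x | g x < f x} →
      ∃ c : ℝ, 0 < c ∧ ∃ S, MeasurableSet S ∧ 0 < P.lam S ∧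
        ∀ x ∈ S, 0 < f x ∧ (1 + c) * g x ≤ f x := by
    intro f g hg hfm hgm hpos
    set E : ℕ → Set (Fin d → ℝ) :=
      fun n => {x | 0 < f x ∧ (1 + 1/(n+1)) * g x ≤ f x} with hE
    have hcover : {x | g x < f x} ⊆ ⋃ n, E n := by
      intro x hx
      simp only [Set.mem_setOf_eq] at hx
      have hfx : 0 < f x := lt_of_le_of_lt (hg x) hx
      rcases (hg x).lt_or_eq with hgx | hgx
      · obtain ⟨n, hn⟩ := exists_nat_one_div_lt (div_pos (sub_pos.mpr hx) hgx)
        refine Set.mem_iUnion.mpr ⟨n, hfx, ?_⟩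
        have : (1:ℝ)/(n+1) * g x ≤ (f x - g x)/ g x * g x := by
          apply mul_le_mul_of_nonneg_right _ (hg x)
          linarith
        rw [div_mul_cancel₀ _ (ne_of_gt hgx)] at this
        linarith [this]
      · refine Set.mem_iUnion.mpr ⟨0, hfx, ?_⟩
        rw [← hgx]
        simpa using hfx.le
    have hUnion : 0 < P.lam (⋃ n, E n) := lt_of_lt_of_le hpos (measure_mono hcover)
    have : ∃ n, P.lam (E n) ≠ 0 := by
      by_contra h
      push_neg at h
      have : P.lam (⋃ n, E n) = 0 := measure_iUnion_null h
      rw [this] at hUnion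
      exact lt_irrefl _ hUnion
    obtain ⟨n, hn⟩ := this
    refine ⟨1/(n+1), by positivity, E n, ?_, pos_iff_ne_zero.mpr hn, fun x hx => hx⟩
    · apply MeasurableSet.inter
      · exact measurableSet_lt measurable_const hfm
      · exact measurableSet_le (Measurable.const_mul hgm _) hfm
  obtain ⟨c1, hc1, S1, hS1m, hS1p, hS1⟩ :=
    key P.fb P.fa P.fa_nonneg P.fb_meas P.fa_meas hB
  obtain ⟨c2, hc2, S2, hS2m, hS2p, hS2⟩ :=
    key P.fa P.fb P.fb_nonneg P.fa_meas P.fb_meas hA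
  refine ⟨min c1 c2, lt_min hc1 hc2, S1, S2, hS1m, hS2m, ?_, ?_, ?_, ?_⟩
  · exact emis_pos_of_dens_pos P false hS1m hS1p (fun x hx => (hS1 x hx).1)
  · exact emis_pos_of_dens_pos P true hS2m hS2p (fun x hx => (hS2 x hx).1)
  · intro x hx
    obtain ⟨h1, h2⟩ := hS1 x hx
    refine ⟨h1, le_trans ?_ h2⟩
    apply mul_le_mul_of_nonneg_right _ (P.fa_nonneg x)
    have := min_le_left c1 c2
    linarith
  · intro x hx
    obtain ⟨h1, h2⟩ := hS2 x hx
    refine ⟨h1, le_trans ?_ h2⟩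
    apply mul_le_mul_of_nonneg_right _ (P.fb_nonneg x)
    have := min_le_right c1 c2
    linarith

end Sets
open scoped ENNReal
section FDD

/-- extend a `Fin n`-indexed boolean path to `ℕ` by `false` -/
def extb {n : ℕ} (y : Fin n → Bool) : ℕ → Bool :=
  fun i => if h : i < n then y ⟨i, h⟩ else false

lemma extb_lt {n : ℕ} (y : Fin n → Bool) {i : ℕ} (h : i < n) : extb y i = y ⟨i, h⟩ :=
  dif_pos h

/-- initial × transition weight of a path of length n+1 -/
noncomputable def Wgt (P : HMMParams d) (n : ℕ) (z : ℕ → Bool) : ℝ≥0∞ :=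
  ENNReal.ofReal (P.initP (z 0) * ∏ i ∈ Finset.range n, P.transP (z i) (z (i+1)))

/-- product of emission probabilities along a path -/
noncomputable def EmProd (P : HMMParams d) (n : ℕ) (z : ℕ → Bool)
    (C : ℕ → Set (Fin d → ℝ)) : ℝ≥0∞ :=
  ∏ i ∈ Finset.range (n+1), P.emis (z i) (C i)

variable {P : HMMParams d} {Ω : Type} [MeasurableSpace Ω] {μ : Measure Ω}
  {Y : ℕ → Ω → Bool} {X : ℕ → Ω → (Fin d → ℝ)}

lemma fdd (hHMM : IsHMM P μ Y X) (n : ℕ) (C : ℕ → Set (Fin d → ℝ))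
    (hC : ∀ i, MeasurableSet (C i)) :
    μ {ω | ∀ i ≤ n, X i ω ∈ C i} =
      ∑ y : Fin (n+1) → Bool, Wgt P n (extb y) * EmProd P n (extb y) C := by
  obtain ⟨hprob, hY, hX, hfd⟩ := hHMM
  set S : (Fin (n+1) → Bool) → Set Ω :=
    fun y => {ω | ∀ i : Fin (n + 1), Y i ω = y i ∧ X i ω ∈ C i} with hS
  have hunion : {ω | ∀ i ≤ n, X i ω ∈ C i} = ⋃ y : Fin (n+1) → Bool, S y := by
    ext ω
    simp only [Set.mem_setOf_eq, Set.mem_iUnion, hS]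
    constructor
    · intro h
      exact ⟨fun i => Y i ω, fun i => ⟨rfl, h i (Nat.lt_succ_iff.mp i.isLt)⟩⟩
    · rintro ⟨y, hy⟩ i hi
      exact (hy ⟨i, Nat.lt_succ_iff.mpr hi⟩).2
  have hmeas : ∀ y : Fin (n+1) → Bool, MeasurableSet (S y) := by
    intro y
    have : S y = ⋂ i : Fin (n+1), ((Y i ⁻¹' {y i}) ∩ (X i ⁻¹' C (i : ℕ))) := by
      ext ω; simp [hS, Set.mem_iInter, forall_and]
    rw [this]
    exact MeasurableSet.iInter fun i =>
      ((hY i (MeasurableSet.singleton (y i)))).inter (hX i (hC i))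
  have hdisj : Pairwise (Function.onFun Disjoint S) := by
    intro y1 y2 hne
    rw [Function.onFun, Set.disjoint_left]
    intro ω h1 h2
    apply hne
    funext i
    rw [← (h1 i).1, ← (h2 i).1]
  rw [hunion, measure_iUnion hdisj hmeas, tsum_fintype]
  apply Finset.sum_congr rfl
  intro y _
  rw [hfd n y (fun i => C i) (fun i => hC i)]
  congr 1
  · rw [Wgt]
    congr 2
    · rw [← Fin.prod_univ_eq_prod_range (fun i => P.transP (extb y i) (extb y (i+1))) n]
      apply Finset.prod_congr rfl
      intro i _
      have h1 : (i : ℕ) < n + 1 := lt_of_lt_of_le i.isLt (Nat.le_succ n)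
      have h2 : (i : ℕ) + 1 < n + 1 := Nat.succ_lt_succ i.isLt
      rw [extb_lt y h1, extb_lt y h2]
      congr 1
  · rw [EmProd]
    rw [← Fin.prod_univ_eq_prod_range (fun i => P.emis (extb y i) (C i)) (n+1)]
    apply Finset.prod_congr rfl
    intro i _
    rw [extb_lt y i.isLt]

end FDD
section Key

variable (P : HMMParams d)

/-- alternating pattern of observation sets : even ↦ Ls (state b), odd ↦ Hs (state a) -/
def altS (Ls Hs : Set (Fin d → ℝ)) : ℕ → Set (Fin d → ℝ) :=
  fun i => if i % 2 = 0 then Ls else Hs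

/-- alternating hidden path : even ↦ b=false, odd ↦ a=true -/
def altY : ℕ → Bool := fun i => decide (i % 2 = 1)

/-- minimum transition probability -/
noncomputable def pm (P : HMMParams d) : ℝ := min (min P.paa P.pab) (min P.pba P.pbb)

lemma pm_pos : 0 < pm P :=
  lt_min (lt_min P.paa_pos P.pab_pos) (lt_min P.pba_pos P.pbb_pos)

lemma trans_ge_pm (s t : Bool) : pm P ≤ P.transP s t := by
  cases s <;> cases t <;>
    simp [HMMParams.transP, pm, min_le_left, min_le_right,
      le_trans (min_le_left _ _) (min_le_left _ _),
      le_trans (min_le_left _ _) (min_le_right _ _),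
      le_trans (min_le_right _ _) (min_le_left _ _),
      le_trans (min_le_right _ _) (min_le_right _ _)]

lemma transP_nonneg (s t : Bool) : 0 ≤ P.transP s t := le_trans (pm_pos P).le (trans_ge_pm P s t)

lemma initP_nonneg (s : Bool) : 0 ≤ P.initP s := by
  cases s <;> simp [HMMParams.initP, P.pia_pos.le, P.pib_pos.le]

/-- the per-block success probability lower bound -/
noncomputable def cP (P : HMMParams d) (Ls Hs : Set (Fin d → ℝ)) (k : ℕ) : ℝ≥0∞ :=
  ENNReal.ofReal ((pm P)^(2*k)) * (P.emis false Ls * P.emis true Hs)^k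

lemma altS_meas {Ls Hs : Set (Fin d → ℝ)} (hLs : MeasurableSet Ls) (hHs : MeasurableSet Hs)
    (i : ℕ) : MeasurableSet (altS Ls Hs i) := by
  unfold altS; split <;> assumption

lemma altprod (Ls Hs : Set (Fin d → ℝ)) (k : ℕ) :
    ∏ i ∈ Finset.range (2*k), P.emis (altY i) (altS Ls Hs i)
      = (P.emis false Ls * P.emis true Hs)^k := by
  induction k with
  | zero => simp
  | succ k ih =>
      have h2 : 2 * (k+1) = (2*k + 1) + 1 := by omega
      rw [h2, Finset.prod_range_succ, Finset.prod_range_succ, ih]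
      have e1 : (2*k) % 2 = 0 := by omega
      have e2 : (2*k + 1) % 2 = 1 := by omega
      simp only [altY, altS, e1, e2]
      norm_num
      ring

variable {Ω : Type} [MeasurableSpace Ω] {μ : Measure Ω}
  {Y : ℕ → Ω → Bool} {X : ℕ → Ω → (Fin d → ℝ)}

lemma block_ext (hHMM : IsHMM P μ Y X) {Ls Hs : Set (Fin d → ℝ)}
    (hLs : MeasurableSet Ls) (hHs : MeasurableSet Hs) {k : ℕ} (hk : 1 ≤ k)
    (m' : ℕ) (C : ℕ → Set (Fin d → ℝ)) (hC : ∀ i, MeasurableSet (C i)) :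
    cP P Ls Hs k * μ {ω | ∀ i < m'+1, X i ω ∈ C i}
      ≤ μ ({ω | ∀ i < m'+1, X i ω ∈ C i} ∩
            {ω | ∀ i < 2*k, X (m'+1+i) ω ∈ altS Ls Hs i}) := by
  set m := m' + 1 with hm
  set C' : ℕ → Set (Fin d → ℝ) := fun i => if i < m then C i else altS Ls Hs (i - m) with hC'def
  have hC' : ∀ i, MeasurableSet (C' i) := by
    intro i
    rw [hC'def]
    dsimp only
    split
    · exact hC i
    · exact altS_meas hLs hHs _
  have hev : {ω | ∀ i < m, X i ω ∈ C i} ∩ {ω | ∀ i < 2*k, X (m+i) ω ∈ altS Ls Hs i}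
      = {ω | ∀ i ≤ m' + 2*k, X i ω ∈ C' i} := by
    ext ω
    simp only [Set.mem_inter_iff, Set.mem_setOf_eq]
    constructor
    · rintro ⟨h1, h2⟩ i hi
      by_cases hlt : i < m
      · rw [hC'def]; simpa [hlt] using h1 i hlt
      · have : i = m + (i - m) := by omega
        rw [hC'def]
        simp only [hlt, if_false]
        have := h2 (i - m) (by omega)
        have hieq : m + (i - m) = i := by omega
        rw [hieq] at this
        exact this
    · intro h
      constructor
      · intro i hi
        have := h i (by omega)
        rw [hC'def] at this
        simpa [hi] using this
      · intro i hi
        have := h (m+i) (by omega)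
        rw [hC'def] at this
        simp only [show ¬ (m + i < m) by omega, if_false] at this
        have hieq : m + i - m = i := by omega
        rw [hieq] at this
        exact this
  have hsmall : {ω | ∀ i < m, X i ω ∈ C i} = {ω | ∀ i ≤ m', X i ω ∈ C i} := by
    ext ω; simp only [Set.mem_setOf_eq, hm]
    exact ⟨fun h i hi => h i (by omega), fun h i hi => h i (by omega)⟩
  rw [hev, hsmall, fdd hHMM (m' + 2*k) C' hC', fdd hHMM m' C hC]
  -- injection of paths
  set g : (Fin (m'+1) → Bool) → (Fin (m'+2*k+1) → Bool) :=
    fun y i => if h : (i:ℕ) < m'+1 then y ⟨i, h⟩ else altY ((i:ℕ) - (m'+1)) with hg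
  have hginj : Function.Injective g := by
    intro y1 y2 he
    funext i
    have h1 : (i : ℕ) < m' + 2*k + 1 := by omega
    have := congrFun he ⟨(i:ℕ), h1⟩
    rw [hg] at this
    simp only [i.isLt, dif_pos] at this
    simpa using this
  -- pointwise bound
  have hterm : ∀ y : Fin (m'+1) → Bool,
      cP P Ls Hs k * (Wgt P m' (extb y) * EmProd P m' (extb y) C)
        ≤ Wgt P (m'+2*k) (extb (g y)) * EmProd P (m'+2*k) (extb (g y)) C' := by
    intro y
    set z := extb (g y) with hz
    have hzlow : ∀ i < m'+1, z i = extb y i := by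
      intro i hi
      rw [hz, extb_lt (g y) (show i < m'+2*k+1 by omega), hg]
      simp only [hi, dif_pos]
      rw [extb_lt y hi]
    have hzhigh : ∀ j < 2*k, z (m'+1+j) = altY j := by
      intro j hj
      rw [hz, extb_lt (g y) (show m'+1+j < m'+2*k+1 by omega), hg]
      simp only [show ¬ (m'+1+j < m'+1) by omega, dif_neg, not_false_iff]
      congr 1
      omega
    -- Wgt bound
    have hWgt : ENNReal.ofReal ((pm P)^(2*k)) * Wgt P m' (extb y)
        ≤ Wgt P (m'+2*k) z := by
      rw [Wgt, Wgt, ← ENNReal.ofReal_mul (pow_nonneg (pm_pos P).le _)]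
      apply ENNReal.ofReal_le_ofReal
      rw [Finset.prod_range_add]
      have hz0 : z 0 = extb y 0 := hzlow 0 (by omega)
      have hpre : ∏ i ∈ Finset.range m', P.transP (z i) (z (i+1))
          = ∏ i ∈ Finset.range m', P.transP (extb y i) (extb y (i+1)) := by
        apply Finset.prod_congr rfl
        intro i hi
        rw [Finset.mem_range] at hi
        rw [hzlow i (by omega), hzlow (i+1) (by omega)]
      have hblock : (pm P)^(2*k) ≤ ∏ i ∈ Finset.range (2*k), P.transP (z (m'+i)) (z (m'+i+1)) := by
        calc (pm P)^(2*k) = ∏ i ∈ Finset.range (2*k), pm P := by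
              rw [Finset.prod_const, Finset.card_range]
          _ ≤ _ := Finset.prod_le_prod (fun _ _ => (pm_pos P).le)
              (fun i _ => trans_ge_pm P _ _)
      rw [hz0, hpre]
      have h1 : 0 ≤ P.initP (extb y 0) * ∏ i ∈ Finset.range m', P.transP (extb y i) (extb y (i+1)) := by
        apply mul_nonneg (initP_nonneg P _)
        exact Finset.prod_nonneg (fun i _ => transP_nonneg P _ _)
      calc (pm P)^(2*k) * (P.initP (extb y 0) * ∏ i ∈ Finset.range m', P.transP (extb y i) (extb y (i+1)))
          ≤ (∏ i ∈ Finset.range (2*k), P.transP (z (m'+i)) (z (m'+i+1))) *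
            (P.initP (extb y 0) * ∏ i ∈ Finset.range m', P.transP (extb y i) (extb y (i+1))) :=
            mul_le_mul_of_nonneg_right hblock h1
        _ = P.initP (extb y 0) *
            ((∏ i ∈ Finset.range m', P.transP (extb y i) (extb y (i+1))) *
             ∏ i ∈ Finset.range (2*k), P.transP (z (m'+i)) (z (m'+i+1))) := by ring
    -- EmProd equality
    have hEm : EmProd P (m'+2*k) z C'
        = EmProd P m' (extb y) C * (P.emis false Ls * P.emis true Hs)^k := by
      rw [EmProd, EmProd, show m'+2*k+1 = (m'+1) + 2*k by omega, Finset.prod_range_add]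
      congr 1
      · apply Finset.prod_congr rfl
        intro i hi
        rw [Finset.mem_range] at hi
        rw [hzlow i hi, hC'def]
        simp only [show i < m by omega, if_true]
      · rw [← altprod P Ls Hs k]
        apply Finset.prod_congr rfl
        intro i hi
        rw [Finset.mem_range] at hi
        rw [hzhigh i hi, hC'def]
        simp only [show ¬ (m'+1+i < m) by omega, if_false]
        have hieq : m' + 1 + i - m = i := by omega
        rw [hieq]
    calc cP P Ls Hs k * (Wgt P m' (extb y) * EmProd P m' (extb y) C)
        = (ENNReal.ofReal ((pm P)^(2*k)) * Wgt P m' (extb y)) *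
          (EmProd P m' (extb y) C * (P.emis false Ls * P.emis true Hs)^k) := by
          rw [cP]; ring
      _ ≤ Wgt P (m'+2*k) z * EmProd P (m'+2*k) z C' := by
          rw [hEm]
          exact mul_le_mul' hWgt (le_refl _)
  calc cP P Ls Hs k * ∑ y : Fin (m'+1) → Bool, Wgt P m' (extb y) * EmProd P m' (extb y) C
      = ∑ y : Fin (m'+1) → Bool, cP P Ls Hs k * (Wgt P m' (extb y) * EmProd P m' (extb y) C) := by
        rw [Finset.mul_sum]
    _ ≤ ∑ y : Fin (m'+1) → Bool,
          Wgt P (m'+2*k) (extb (g y)) * EmProd P (m'+2*k) (extb (g y)) C' :=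
        Finset.sum_le_sum (fun y _ => hterm y)
    _ = ∑ y' ∈ Finset.image g Finset.univ,
          Wgt P (m'+2*k) (extb y') * EmProd P (m'+2*k) (extb y') C' := by
        rw [Finset.sum_image (fun a _ b _ h => hginj h)]
    _ ≤ ∑ y' : Fin (m'+2*k+1) → Bool,
          Wgt P (m'+2*k) (extb y') * EmProd P (m'+2*k) (extb y') C' :=
        Finset.sum_le_sum_of_subset (Finset.subset_univ _)

end Key
section Fail

variable (P : HMMParams d) {Ω : Type} [MeasurableSpace Ω] {μ : Measure Ω}
  {Y : ℕ → Ω → Bool} {X : ℕ → Ω → (Fin d → ℝ)}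

lemma boxMeas {Ω' : Type} [MeasurableSpace Ω'] (X' : ℕ → Ω' → (Fin d → ℝ))
    (hX : ∀ i, Measurable (X' i)) (n : ℕ) (C : ℕ → Set (Fin d → ℝ))
    (hC : ∀ i, MeasurableSet (C i)) : MeasurableSet {ω | ∀ i < n, X' i ω ∈ C i} := by
  have : {ω | ∀ i < n, X' i ω ∈ C i} = ⋂ i ∈ Finset.range n, X' i ⁻¹' C i := by
    ext ω; simp [Finset.mem_range]
  rw [this]
  exact Finset.measurableSet_biInter _ (fun i _ => hX i (hC i))

lemma failMeas (hX : ∀ i, Measurable (X i)) {Ls Hs : Set (Fin d → ℝ)}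
    (hLs : MeasurableSet Ls) (hHs : MeasurableSet Hs) (k : ℕ) (N : ℕ) (base : ℕ → ℕ) :
    MeasurableSet {ω | ∀ j < N, ∃ i < 2*k, X (base j + i) ω ∉ altS Ls Hs i} := by
  have : {ω | ∀ j < N, ∃ i < 2*k, X (base j + i) ω ∉ altS Ls Hs i}
      = ⋂ j ∈ Finset.range N, ⋃ i ∈ Finset.range (2*k), X (base j + i) ⁻¹' (altS Ls Hs i)ᶜ := by
    ext ω; simp [Finset.mem_range]
  rw [this]
  exact Finset.measurableSet_biInter _ (fun j _ =>
    Finset.measurableSet_biUnion _ (fun i _ => hX _ ((altS_meas hLs hHs i).compl)))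

lemma fail_bound (hHMM : IsHMM P μ Y X) {Ls Hs : Set (Fin d → ℝ)}
    (hLs : MeasurableSet Ls) (hHs : MeasurableSet Hs) {k : ℕ} (hk : 1 ≤ k) :
    ∀ (N : ℕ) (m' : ℕ) (C : ℕ → Set (Fin d → ℝ)), (∀ i, MeasurableSet (C i)) →
    μ ({ω | ∀ i < m'+1, X i ω ∈ C i} ∩
        {ω | ∀ j < N, ∃ i < 2*k, X ((m'+1) + 2*k*j + i) ω ∉ altS Ls Hs i})
      ≤ (1 - cP P Ls Hs k)^N * μ {ω | ∀ i < m'+1, X i ω ∈ C i} := by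
  obtain ⟨hprob, hY, hX, _⟩ := id hHMM
  haveI := hprob
  intro N
  induction N with
  | zero =>
      intro m' C hC
      simp only [Nat.not_lt_zero, false_implies, implies_true, Set.setOf_true,
        Set.inter_univ, pow_zero, one_mul]
      exact le_refl _
  | succ N ih =>
      intro m' C hC
      set E := {ω | ∀ i < m'+1, X i ω ∈ C i} with hE
      have hEmeas : MeasurableSet E := boxMeas X hX _ C hC
      set Tail := {ω | ∀ j < N, ∃ i < 2*k, X ((m'+2*k+1) + 2*k*j + i) ω ∉ altS Ls Hs i}
        with hTail
      have hTailMeas : MeasurableSet Tail :=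
        failMeas hX hLs hHs k N (fun j => (m'+2*k+1) + 2*k*j)
      set D : Fin (2*k) → Set Ω := fun i =>
        E ∩ {ω | (∀ i' < (i:ℕ), X (m'+1+i') ω ∈ altS Ls Hs i') ∧
                  X (m'+1+(i:ℕ)) ω ∉ altS Ls Hs (i:ℕ)} with hD
      have hDmeas : ∀ i, MeasurableSet (D i) := by
        intro i
        apply hEmeas.inter
        apply MeasurableSet.inter
        · exact boxMeas (fun i' => X (m'+1+i')) (fun i' => hX _) (i:ℕ) (altS Ls Hs)
            (fun i' => altS_meas hLs hHs i')
        · exact hX _ ((altS_meas hLs hHs _).compl)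
      -- decomposition of the first failing block
      have hsplit : E ∩ {ω | ∀ j < N+1, ∃ i < 2*k, X ((m'+1) + 2*k*j + i) ω ∉ altS Ls Hs i}
          = ⋃ i : Fin (2*k), (D i ∩ Tail) := by
        ext ω
        simp only [Set.mem_inter_iff, Set.mem_setOf_eq, Set.mem_iUnion, hD, hE, hTail]
        constructor
        · rintro ⟨h1, h2⟩
          have hex : ∃ i, i < 2*k ∧ X ((m'+1) + i) ω ∉ altS Ls Hs i := by
            obtain ⟨i, hi, hx⟩ := h2 0 (by omega)
            have : m'+1+2*k*0+i = m'+1+i := by ring_nf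
            rw [this] at hx
            exact ⟨i, hi, hx⟩
          classical
          let i0 := Nat.find hex
          obtain ⟨hi0lt, hi0bad⟩ := Nat.find_spec hex
          refine ⟨⟨i0, hi0lt⟩, ⟨⟨h1, ?_, hi0bad⟩, ?_⟩⟩
          · intro i' hi'
            by_contra hbad
            exact Nat.find_min hex hi' ⟨by omega, hbad⟩
          · intro j hj
            obtain ⟨i, hi, hx⟩ := h2 (j+1) (by omega)
            refine ⟨i, hi, ?_⟩
            have : m'+1+2*k*(j+1)+i = m'+2*k+1+2*k*j+i := by ring
            rw [this] at hx
            exact hx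
        · rintro ⟨i, ⟨⟨h1, _, hbad⟩, htail⟩⟩
          refine ⟨h1, ?_⟩
          intro j hj
          match j with
          | 0 =>
              refine ⟨(i:ℕ), i.isLt, ?_⟩
              have : m'+1+2*k*0+(i:ℕ) = m'+1+(i:ℕ) := by ring_nf
              rw [this]
              exact hbad
          | (j'+1) =>
              obtain ⟨i', hi', hx⟩ := htail j' (by omega)
              refine ⟨i', hi', ?_⟩
              have : m'+1+2*k*(j'+1)+i' = m'+2*k+1+2*k*j'+i' := by ring
              rw [this]
              exact hx
      have hdisj : Pairwise (Function.onFun Disjoint (fun i => D i ∩ Tail)) := by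
        intro i1 i2 hne
        rw [Function.onFun, Set.disjoint_left]
        rintro ω ⟨⟨_, hall1, hbad1⟩, _⟩ ⟨⟨_, hall2, hbad2⟩, _⟩
        rcases lt_trichotomy (i1:ℕ) (i2:ℕ) with h | h | h
        · exact hbad1 (hall2 _ h)
        · exact hne (Fin.ext h)
        · exact hbad2 (hall1 _ h)
      -- each D i is a box over m' + 2k + 1 coordinates
      have hDbox : ∀ i : Fin (2*k), ∃ C'' : ℕ → Set (Fin d → ℝ),
          (∀ j, MeasurableSet (C'' j)) ∧
          D i = {ω | ∀ j < (m'+2*k)+1, X j ω ∈ C'' j} := by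
        intro i
        classical
        refine ⟨fun j => if j < m'+1 then C j
          else if j - (m'+1) < (i:ℕ) then altS Ls Hs (j - (m'+1))
          else if j - (m'+1) = (i:ℕ) then (altS Ls Hs (i:ℕ))ᶜ
          else Set.univ, ?_, ?_⟩
        · intro j
          dsimp only
          split
          · exact hC j
          split
          · exact altS_meas hLs hHs _
          split
          · exact (altS_meas hLs hHs _).compl
          · exact MeasurableSet.univ
        · ext ω
          simp only [hD, hE, Set.mem_inter_iff, Set.mem_setOf_eq]
          constructor
          · rintro ⟨h1, h2, h3⟩ j hj
            by_cases hj1 : j < m'+1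
            · simpa [hj1] using h1 j hj1
            · have hrep : j = m'+1+(j - (m'+1)) := by omega
              by_cases hj2 : j - (m'+1) < (i:ℕ)
              · simp only [hj1, if_false, hj2, if_true]
                have := h2 _ hj2
                rw [← hrep] at this
                exact this
              · by_cases hj3 : j - (m'+1) = (i:ℕ)
                · simp only [hj1, if_false]
                  rw [hj3]
                  simp only [lt_irrefl, if_false, eq_self_iff_true, if_true]
                  rw [show j = m'+1+(i:ℕ) by omega]
                  exact h3
                · simp [hj1, hj2, hj3]
          · intro h
            refine ⟨?_, ?_, ?_⟩
            · intro j hj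
              have := h j (by omega)
              simpa [hj] using this
            · intro i' hi'
              have := h (m'+1+i') (by omega)
              simp only [show ¬ (m'+1+i' < m'+1) by omega, if_false,
                show m'+1+i' - (m'+1) = i' by omega, hi', if_true] at this
              exact this
            · have := h (m'+1+(i:ℕ)) (by omega)
              simp only [show ¬ (m'+1+(i:ℕ) < m'+1) by omega, if_false,
                show m'+1+(i:ℕ) - (m'+1) = (i:ℕ) by omega, lt_irrefl,
                eq_self_iff_true, if_true] at this
              simpa using this
      -- sum over the decomposition
      rw [hsplit, measure_iUnion hdisj (fun i => (hDmeas i).inter hTailMeas), tsum_fintype]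
      have hterm : ∀ i : Fin (2*k), μ (D i ∩ Tail) ≤ (1 - cP P Ls Hs k)^N * μ (D i) := by
        intro i
        obtain ⟨C'', hC''meas, hC''eq⟩ := hDbox i
        have := ih (m'+2*k) C'' hC''meas
        rw [← hC''eq] at this
        exact this
      calc ∑ i : Fin (2*k), μ (D i ∩ Tail)
          ≤ ∑ i : Fin (2*k), (1 - cP P Ls Hs k)^N * μ (D i) :=
            Finset.sum_le_sum (fun i _ => hterm i)
        _ = (1 - cP P Ls Hs k)^N * ∑ i : Fin (2*k), μ (D i) := by
            rw [Finset.mul_sum]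
        _ ≤ (1 - cP P Ls Hs k)^N * ((1 - cP P Ls Hs k) * μ E) := by
            apply mul_le_mul' (le_refl _)
            -- ∑ μ (D i) = μ (E \ Pat) ≤ (1-c) μ E
            have hDdisj : Pairwise (Function.onFun Disjoint D) := by
              intro i1 i2 hne
              rw [Function.onFun, Set.disjoint_left]
              rintro ω ⟨_, hall1, hbad1⟩ ⟨_, hall2, hbad2⟩
              rcases lt_trichotomy (i1:ℕ) (i2:ℕ) with h | h | h
              · exact hbad1 (hall2 _ h)
              · exact hne (Fin.ext h)
              · exact hbad2 (hall1 _ h)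
            have hPat : ⋃ i : Fin (2*k), D i
                = E \ {ω | ∀ i < 2*k, X (m'+1+i) ω ∈ altS Ls Hs i} := by
              ext ω
              simp only [Set.mem_iUnion, hD, Set.mem_inter_iff, Set.mem_setOf_eq,
                Set.mem_diff]
              constructor
              · rintro ⟨i, hEω, hall, hbad⟩
                exact ⟨hEω, fun hcon => hbad (hcon _ i.isLt)⟩
              · rintro ⟨hEω, hcon⟩
                push_neg at hcon
                obtain ⟨i, hi, hbad⟩ := hcon
                have hex : ∃ i, i < 2*k ∧ X (m'+1+i) ω ∉ altS Ls Hs i := ⟨i, hi, hbad⟩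
                classical
                let i0 := Nat.find hex
                obtain ⟨hi0lt, hi0bad⟩ := Nat.find_spec hex
                refine ⟨⟨i0, hi0lt⟩, hEω, ?_, hi0bad⟩
                intro i' hi'
                by_contra hbad'
                exact Nat.find_min hex hi' ⟨by omega, hbad'⟩
            have hsum : ∑ i : Fin (2*k), μ (D i)
                = μ (E \ {ω | ∀ i < 2*k, X (m'+1+i) ω ∈ altS Ls Hs i}) := by
              rw [← hPat, measure_iUnion hDdisj hDmeas, tsum_fintype]
            rw [hsum]
            set PatB := {ω | ∀ i < 2*k, X (m'+1+i) ω ∈ altS Ls Hs i} with hPatB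
            have hPatBmeas : MeasurableSet PatB := by
              have : PatB = ⋂ i ∈ Finset.range (2*k), X (m'+1+i) ⁻¹' altS Ls Hs i := by
                ext ω; simp [Finset.mem_range, hPatB]
              rw [this]
              exact Finset.measurableSet_biInter _ (fun i _ => hX _ (altS_meas hLs hHs i))
            have hinter : μ (E ∩ PatB) + μ (E \ PatB) = μ E :=
              measure_inter_add_diff E hPatBmeas
            have hkey : cP P Ls Hs k * μ E ≤ μ (E ∩ PatB) :=
              block_ext P hHMM hLs hHs hk m' C hC
            have hfin : μ (E ∩ PatB) ≠ ⊤ := measure_ne_top μ _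
            have h1 : μ (E \ PatB) = μ E - μ (E ∩ PatB) := by
              rw [← hinter]
              rw [ENNReal.add_sub_cancel_left hfin]
            rw [h1]
            calc μ E - μ (E ∩ PatB) ≤ μ E - cP P Ls Hs k * μ E :=
                  tsub_le_tsub_left hkey _
              _ ≤ (1 - cP P Ls Hs k) * μ E := by
                  rw [tsub_le_iff_right]
                  calc μ E = 1 * μ E := (one_mul _).symm
                    _ ≤ ((1 - cP P Ls Hs k) + cP P Ls Hs k) * μ E := by
                        apply mul_le_mul_of_nonneg_right _ zero_le
                        exact le_tsub_add
                    _ = (1 - cP P Ls Hs k) * μ E + cP P Ls Hs k * μ E := by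
                        rw [add_mul]
        _ = (1 - cP P Ls Hs k)^(N+1) * μ E := by
            rw [pow_succ]; ring

end Fail
section MainA

variable (P : HMMParams d) {Ω : Type} [MeasurableSpace Ω] {μ : Measure Ω}
  {Y : ℕ → Ω → Bool} {X : ℕ → Ω → (Fin d → ℝ)}

lemma main_a (hHMM : IsHMM P μ Y X) (hc : P.paa < P.pba) (hba : P.pab ≤ P.pba) :
    ∀ᵐ ω ∂μ, {u : ℕ | StrongANode P (fun i => X i ω) u}.Infinite := by
  classical
  obtain ⟨hprob, hY, hX, hfd⟩ := id hHMM
  haveI := hprob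
  obtain ⟨ε, hε, Ls, Hs, hLsm, hHsm, heL, heH, hLsP, hHsP⟩ := exists_eps_sets P
  -- choose k
  have h1e : (1:ℝ) < 1 + ε := by linarith
  obtain ⟨k0, hk0⟩ := pow_unbounded_of_one_lt ((P.pba * P.pab) / (P.paa * P.paa)) h1e
  set k := k0 + 1 with hkdef
  have hk1 : 1 ≤ k := by omega
  have hpaa2 : (0:ℝ) < P.paa * P.paa := mul_pos P.paa_pos P.paa_pos
  have hkbig : P.pba * P.pab < (1 + ε) ^ (2 * k - 1) * (P.paa * P.paa) := by
    have hle : (1+ε) ^ k0 ≤ (1+ε) ^ (2*k - 1) :=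
      pow_le_pow_right₀ h1e.le (by omega)
    have h2 : P.pba * P.pab < (1+ε)^k0 * (P.paa * P.paa) := by
      rw [div_lt_iff₀ hpaa2] at hk0
      linarith
    nlinarith [pow_pos (lt_trans zero_lt_one h1e) k0]
  -- the degenerate set
  set Z : Set (Fin d → ℝ) := {x | P.fa x = 0 ∧ P.fb x = 0} with hZ
  have hZm : MeasurableSet Z := by
    exact (P.fa_meas (measurableSet_singleton 0)).inter (P.fb_meas (measurableSet_singleton 0))
  have hZnull : ∀ i, μ {ω | X i ω ∈ Z} = 0 := by
    intro i
    set Ci : ℕ → Set (Fin d → ℝ) := fun j => if j = i then Z else Set.univ with hCi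
    have hCim : ∀ j, MeasurableSet (Ci j) := by
      intro j; rw [hCi]; dsimp only; split
      · exact hZm
      · exact MeasurableSet.univ
    have hev : {ω | X i ω ∈ Z} = {ω | ∀ j ≤ i, X j ω ∈ Ci j} := by
      ext ω
      simp only [Set.mem_setOf_eq, hCi]
      constructor
      · intro h j hj
        by_cases hji : j = i
        · subst hji; simpa using h
        · simp [hji]
      · intro h
        have := h i (le_refl i)
        simpa using this
    rw [hev, fdd hHMM i Ci hCim]
    apply Finset.sum_eq_zero
    intro y _
    have hemz : P.emis (extb y i) (Ci i) = 0 := by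
      have : Ci i = Z := by rw [hCi]; simp
      rw [this]
      apply emis_zero_of_dens_zero P _ hZm
      intro x hx
      cases (extb y i) <;> simp only [HMMParams.dens]
      · exact hx.2
      · exact hx.1
    have : EmProd P i (extb y) Ci = 0 :=
      Finset.prod_eq_zero (Finset.self_mem_range_succ i) hemz
    rw [this, mul_zero]
  -- the no-pattern-after-t sets
  set c := cP P Ls Hs k with hcdef
  have hcne : c ≠ 0 := by
    rw [hcdef, cP]
    apply mul_ne_zero
    · exact (ENNReal.ofReal_pos.mpr (pow_pos (pm_pos P) _)).ne'
    · exact pow_ne_zero _ (mul_ne_zero heL.ne' heH.ne')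
  have hsub1 : 1 - c < 1 := ENNReal.sub_lt_self ENNReal.one_ne_top one_ne_zero hcne
  set Bad : ℕ → Set Ω :=
    fun t => {ω | ∀ j : ℕ, ∃ i < 2*k, X ((2*k*t+1) + 2*k*j + i) ω ∉ altS Ls Hs i} with hBad
  have hBadNull : ∀ t, μ (Bad t) = 0 := by
    intro t
    have hbound : ∀ N : ℕ, μ (Bad t) ≤ (1 - c)^N := by
      intro N
      have hsubset : Bad t ⊆ {ω | ∀ i < 2*k*t+1, X i ω ∈ (fun _ => Set.univ) i} ∩
          {ω | ∀ j < N, ∃ i < 2*k, X ((2*k*t+1) + 2*k*j + i) ω ∉ altS Ls Hs i} := by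
        intro ω hω
        exact ⟨fun i _ => Set.mem_univ _, fun j _ => hω j⟩
      have := fail_bound P hHMM hLsm hHsm hk1 N (2*k*t) (fun _ => Set.univ)
        (fun _ => MeasurableSet.univ)
      have huniv : {ω : Ω | ∀ i < 2*k*t+1, X i ω ∈ (fun _ => (Set.univ : Set (Fin d → ℝ))) i}
          = Set.univ := by
        ext ω; simp
      rw [huniv] at this
      calc μ (Bad t) ≤ μ (Set.univ ∩
            {ω | ∀ j < N, ∃ i < 2*k, X ((2*k*t+1) + 2*k*j + i) ω ∉ altS Ls Hs i}) := by
            apply measure_mono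
            rw [huniv] at hsubset
            exact hsubset
        _ ≤ (1 - c)^N * μ (Set.univ : Set Ω) := this
        _ = (1 - c)^N := by rw [measure_univ, mul_one]
    have htend : Filter.Tendsto (fun N => (1 - c)^N) Filter.atTop (nhds 0) :=
      ENNReal.tendsto_pow_atTop_nhds_zero_of_lt_one hsub1
    have : μ (Bad t) ≤ 0 := ge_of_tendsto' htend hbound
    exact le_antisymm this zero_le
  -- total null set
  set NBad : Set Ω := (⋃ i, {ω | X i ω ∈ Z}) ∪ (⋃ t, Bad t) with hNBad
  have hNBadNull : μ NBad = 0 := by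
    rw [hNBad]
    apply measure_union_null
    · exact measure_iUnion_null hZnull
    · exact measure_iUnion_null hBadNull
  -- pointwise conclusion off the null set
  have hpoint : ∀ ω, ω ∉ NBad → {u : ℕ | StrongANode P (fun i => X i ω) u}.Infinite := by
    intro ω hω
    rw [hNBad] at hω
    have hnotZ : ∀ i, X i ω ∉ Z := by
      intro i hmem
      exact hω (Set.mem_union_left _ (Set.mem_iUnion.mpr ⟨i, hmem⟩))
    have hnotBad : ∀ t, ω ∉ Bad t := by
      intro t hmem
      exact hω (Set.mem_union_right _ (Set.mem_iUnion.mpr ⟨t, hmem⟩))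
    have hg : ∀ i, 0 < P.fa (X i ω) ∨ 0 < P.fb (X i ω) := by
      intro i
      have := hnotZ i
      rw [hZ] at this
      simp only [Set.mem_setOf_eq, not_and_or] at this
      rcases this with h | h
      · left; exact lt_of_le_of_ne (P.fa_nonneg _) (Ne.symm h)
      · right; exact lt_of_le_of_ne (P.fb_nonneg _) (Ne.symm h)
    by_contra hfin
    rw [Set.not_infinite] at hfin
    obtain ⟨n, hn⟩ := hfin.bddAbove
    simp only [mem_upperBounds, Set.mem_setOf_eq] at hn
    -- find a pattern block beyond n
    have := hnotBad (n+1)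
    rw [hBad] at this
    simp only [Set.mem_setOf_eq, not_forall] at this
    obtain ⟨j, hj⟩ := this
    push_neg at hj
    set m := (2*k*(n+1)+1) + 2*k*j with hm
    have hPat : ∀ i < 2*k, X (m + i) ω ∈ altS Ls Hs i := hj
    have hlo : ∀ j' < k, 0 < P.fb (X (m + 2*j') ω) ∧
        (1+ε) * P.fa (X (m + 2*j') ω) ≤ P.fb (X (m + 2*j') ω) := by
      intro j' hj'
      have := hPat (2*j') (by omega)
      rw [altS] at this
      simp only [Nat.mul_mod_right, if_pos rfl] at this
      exact hLsP _ this
    have hhi : ∀ j' < k, 0 < P.fa (X (m + 2*j' + 1) ω) ∧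
        (1+ε) * P.fb (X (m + 2*j' + 1) ω) ≤ P.fa (X (m + 2*j' + 1) ω) := by
      intro j' hj'
      have := hPat (2*j'+1) (by omega)
      rw [altS] at this
      simp only [show (2*j'+1) % 2 = 1 by omega] at this
      rw [show m + (2*j'+1) = m + 2*j' + 1 by omega] at this
      simp only [Nat.one_ne_zero, if_false] at this
      exact hHsP _ this
    obtain ⟨u, hu1, hu2, hnode⟩ := node_in_block P hc hba hε hk1 hkbig
      (fun i => X i ω) m hg hlo hhi
    have hun : u ≤ n := hn u hnode
    have hmn : n + 1 ≤ m := by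
      have h2k : 2*(n+1) ≤ 2*k*(n+1) := Nat.mul_le_mul_right (n+1) (by omega)
      omega
    omega
  rw [MeasureTheory.ae_iff]
  apply measure_mono_null _ hNBadNull
  intro ω hω
  simp only [Set.mem_setOf_eq] at hω
  by_contra hmem
  exact hω (hpoint ω hmem)

end MainA
section Swap

/-- the parameters with the roles of the two states exchanged -/
noncomputable def swapP (P : HMMParams d) : HMMParams d where
  paa := P.pbb
  pab := P.pba
  pba := P.pab
  pbb := P.paa
  pia := P.pib
  pib := P.pia
  fa := P.fb
  fb := P.fa
  lam := P.lam
  paa_pos := P.pbb_pos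
  pab_pos := P.pba_pos
  pba_pos := P.pab_pos
  pbb_pos := P.paa_pos
  rowa := by have := P.rowb; linarith
  rowb := by have := P.rowa; linarith
  pia_pos := P.pib_pos
  pib_pos := P.pia_pos
  pi_sum := by have := P.pi_sum; linarith
  pi_stat := by
    linear_combination (-P.pib) * P.rowb + (-P.pia) * P.rowa + (-1) * P.pi_stat
  fa_nonneg := P.fb_nonneg
  fb_nonneg := P.fa_nonneg
  fa_meas := P.fb_meas
  fb_meas := P.fa_meas
  lam_sigmaFinite := P.lam_sigmaFinite
  fa_int := P.fb_int
  fb_int := P.fa_int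
  emis_ne := by
    have : {x | P.fb x ≠ P.fa x} = {x | P.fa x ≠ P.fb x} := by
      ext x; simp [ne_comm]
    rw [this]
    exact P.emis_ne

variable (P : HMMParams d)

lemma delta_swap (x : ℕ → Fin d → ℝ) :
    ∀ u, delta (swapP P) x u = ((delta P x u).2, (delta P x u).1) := by
  intro u
  induction u with
  | zero => rfl
  | succ u ih =>
      rw [delta_succ, delta_succ, ih]
      simp only [swapP]
      rw [Prod.mk.injEq]
      constructor
      · rw [max_comm]
      · rw [max_comm]

lemma strongB_iff_swap (x : ℕ → Fin d → ℝ) (u : ℕ) :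
    StrongBNode P x u ↔ StrongANode (swapP P) x u := by
  rw [StrongBNode, StrongANode, delta_swap]
  simp only [swapP]
  tauto

lemma dens_swap (s : Bool) : (swapP P).dens s = P.dens (!s) := by
  cases s <;> rfl

lemma initP_swap (s : Bool) : (swapP P).initP s = P.initP (!s) := by
  cases s <;> rfl

lemma transP_swap (s t : Bool) : (swapP P).transP s t = P.transP (!s) (!t) := by
  cases s <;> cases t <;> rfl

lemma emis_swap (s : Bool) : (swapP P).emis s = P.emis (!s) := by
  rw [HMMParams.emis, HMMParams.emis, dens_swap]
  rfl

variable {Ω : Type} [MeasurableSpace Ω] {μ : Measure Ω}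
  {Y : ℕ → Ω → Bool} {X : ℕ → Ω → (Fin d → ℝ)}

lemma isHMM_swap (hHMM : IsHMM P μ Y X) :
    IsHMM (swapP P) μ (fun i ω => !(Y i ω)) X := by
  obtain ⟨hprob, hY, hX, hfd⟩ := hHMM
  have hnot : Measurable Bool.not := measurable_from_top
  refine ⟨hprob, fun i => hnot.comp (hY i), hX, ?_⟩
  intro n y A hA
  have hev : {ω | ∀ i : Fin (n+1), (!(Y i ω)) = y i ∧ X i ω ∈ A i}
      = {ω | ∀ i : Fin (n+1), Y i ω = (!(y i)) ∧ X i ω ∈ A i} := by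
    ext ω
    apply forall_congr'
    intro i
    have : ((!(Y (i:ℕ) ω)) = y i) ↔ (Y (i:ℕ) ω = !(y i)) := by
      cases (Y (i:ℕ) ω) <;> cases (y i) <;> simp
    rw [this]
  rw [hev, hfd n (fun i => !(y i)) A hA]
  congr 1
  · congr 2
    · rw [initP_swap]
    · apply Finset.prod_congr rfl
      intro i _
      rw [transP_swap]
  · apply Finset.prod_congr rfl
    intro i _
    rw [emis_swap]

end Swap
/-- **Theorem 2 (case 2).** Suppose `p_aa < p_ba`. If `p_ba ≥ p_ab`, then almost every
realization has infinitely many strong `a`-nodes; symmetrically, if `p_ab ≥ p_ba`,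
infinitely many strong `b`-nodes. -/
theorem theorem2_case2 {d : ℕ} (P : HMMParams d) {Ω : Type} [MeasurableSpace Ω]
    (μ : Measure Ω) (Y : ℕ → Ω → Bool) (X : ℕ → Ω → (Fin d → ℝ))
    (hHMM : IsHMM P μ Y X) (hcase : P.paa < P.pba) :
    (P.pab ≤ P.pba →
      ∀ᵐ ω ∂μ, {u : ℕ | StrongANode P (fun i => X i ω) u}.Infinite) ∧
    (P.pba ≤ P.pab →
      ∀ᵐ ω ∂μ, {u : ℕ | StrongBNode P (fun i => X i ω) u}.Infinite) := by
  constructor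
  · intro hba
    exact main_a P hHMM hcase hba
  · intro hab
    have hc' : (swapP P).paa < (swapP P).pba := pbb_lt_pab P hcase
    have hba' : (swapP P).pab ≤ (swapP P).pba := hab
    have hae := main_a (swapP P) (isHMM_swap P hHMM) hc' hba'
    filter_upwards [hae] with ω hω
    have hset : {u : ℕ | StrongBNode P (fun i => X i ω) u}
        = {u : ℕ | StrongANode (swapP P) (fun i => X i ω) u} := by
      ext u
      exact strongB_iff_swap P _ u
    rw [hset]
    exact hω
end TwoStateHMM
end

section
/- Lemma (Lemma 2). Any two-state HMM satisfies at least one of the following two conditions: P_a({x : f_a(x)·max(p_aa, p_ba) > f_b(x)·max(p_bb, p_ab)}) > 0, or P_b({x : f_b(x)·max(p_bb, p_ab) > f_a(x)·max(p_aa, p_ba)}) > 0. -/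
open MeasureTheory

namespace TwoStateHMM

variable {d : ℕ}

private lemma aux_null {d : ℕ} (lam : Measure (Fin d → ℝ))
    (f g : (Fin d → ℝ) → ℝ) (hf : Measurable f) (hg : Measurable g)
    (hg0 : ∀ x, 0 ≤ g x) (c c' : ℝ) (hc : 0 < c) (hc' : 0 ≤ c')
    (h : lam.withDensity (fun x => ENNReal.ofReal (f x)) {x | g x * c' < f x * c} = 0) :
    lam {x | g x * c' < f x * c} = 0 := by
  set S : Set (Fin d → ℝ) := {x | g x * c' < f x * c} with hS
  have hSm : MeasurableSet S :=
    measurableSet_lt (hg.mul measurable_const) (hf.mul measurable_const)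
  have h1 : ∫⁻ x in S, ENNReal.ofReal (f x) ∂lam = 0 := by
    rw [← withDensity_apply _ hSm]; exact h
  have h2 : ∀ᵐ x ∂lam.restrict S, ENNReal.ofReal (f x) = 0 := by
    exact (lintegral_eq_zero_iff hf.ennreal_ofReal).mp h1
  have h3 : ∀ᵐ x ∂lam.restrict S, x ∈ S := ae_restrict_mem hSm
  have h4 : ∀ᵐ x ∂lam.restrict S, False := by
    filter_upwards [h2, h3] with x hx hxS
    have hfx : 0 < f x := by
      have h0 : 0 ≤ g x * c' := mul_nonneg (hg0 x) hc'
      have : 0 < f x * c := lt_of_le_of_lt h0 hxS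
      nlinarith
    have : ENNReal.ofReal (f x) ≠ 0 := by
      simp [ENNReal.ofReal_eq_zero, not_le.mpr hfx]
    exact this hx
  have h5 : lam.restrict S Set.univ = 0 := by
    have := ae_iff.mp h4
    simpa using this
  rw [Measure.restrict_apply_univ] at h5
  exact h5

/-- **Lemma 2.** Any two-state HMM satisfies at least one of the conditions
`P_a({f_a·max(p_aa,p_ba) > f_b·max(p_bb,p_ab)}) > 0` and
`P_b({f_b·max(p_bb,p_ab) > f_a·max(p_aa,p_ba)}) > 0`. -/
theorem lemma2_ab_or_ba {d : ℕ} (P : HMMParams d) :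
    0 < P.emis true {x | P.fb x * max P.pbb P.pab < P.fa x * max P.paa P.pba} ∨
    0 < P.emis false {x | P.fa x * max P.paa P.pba < P.fb x * max P.pbb P.pab} := by
  by_contra h
  push_neg at h
  obtain ⟨hA, hB⟩ := h
  set Ma := max P.paa P.pba with hMa
  set Mb := max P.pbb P.pab with hMb
  have hMa0 : (0:ℝ) < Ma := lt_max_of_lt_left P.paa_pos
  have hMb0 : (0:ℝ) < Mb := lt_max_of_lt_left P.pbb_pos
  have hA0 : P.emis true {x | P.fb x * Mb < P.fa x * Ma} = 0 :=
    le_antisymm (not_lt.mp (by exact fun hh => absurd hh (not_lt.mpr hA))) (zero_le)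
  have hB0 : P.emis false {x | P.fa x * Ma < P.fb x * Mb} = 0 :=
    le_antisymm (not_lt.mp (by exact fun hh => absurd hh (not_lt.mpr hB))) (zero_le)
  have hS0 : P.lam {x | P.fb x * Mb < P.fa x * Ma} = 0 := by
    refine aux_null P.lam P.fa P.fb P.fa_meas P.fb_meas P.fb_nonneg Ma Mb hMa0 hMb0.le ?_
    simpa [HMMParams.emis, HMMParams.dens] using hA0
  have hT0 : P.lam {x | P.fa x * Ma < P.fb x * Mb} = 0 := by
    refine aux_null P.lam P.fb P.fa P.fb_meas P.fa_meas P.fa_nonneg Mb Ma hMb0 hMa0.le ?_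
    simpa [HMMParams.emis, HMMParams.dens] using hB0
  have hae : ∀ᵐ x ∂P.lam, P.fa x * Ma = P.fb x * Mb := by
    rw [ae_iff]
    refine measure_mono_null (fun x hx => ?_)
      (measure_union_null hS0 hT0)
    simp only [Set.mem_setOf_eq] at hx ⊢
    rcases lt_trichotomy (P.fa x * Ma) (P.fb x * Mb) with h1 | h1 | h1
    · exact Or.inr h1
    · exact absurd h1 hx
    · exact Or.inl h1
  have hint : ∫ x, P.fa x * Ma ∂P.lam = ∫ x, P.fb x * Mb ∂P.lam :=
    integral_congr_ae hae
  rw [integral_mul_const, integral_mul_const, P.fa_int, P.fb_int, one_mul, one_mul] at hint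
  have hae2 : ∀ᵐ x ∂P.lam, P.fa x = P.fb x := by
    filter_upwards [hae] with x hx
    rw [hint] at hx
    exact mul_right_cancel₀ (ne_of_gt hMb0) hx
  have : P.lam {x | P.fa x ≠ P.fb x} = 0 := by
    have := ae_iff.mp hae2
    simpa using this
  exact absurd P.emis_ne (by simp [this])
end TwoStateHMM
end
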